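/- Let E be a complex inner product space, let I be a finite index set, let (γ_i)_{i ∈ I} be an orthonormal family in E, let q : I → ℝ satisfy q_i ≥ 0 for all i and Σ_{i ∈ I} q_i ≤ 1, let A : E → E be a continuous linear map, and let δ > 0 be such that q_i · ‖A γ_i − γ_i‖ ≤ 2·√δ for all i ∈ I. Let P be the orthogonal projection of E onto the subspace spanned by { γ_i : i ∈ I, q_i ≥ (4δ)^{1/6} }. Then for every x ∈ E, ‖A (P x) − P x‖ ≤ (4δ)^{1/6} · ‖x‖. (This is the concluding estimate, with the constants (4δ)^{1/6}, in the proof of Lemma 3.3.) -/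

import Mathlib

open scoped InnerProductSpace

/-- Concluding estimate (with the constants `(4δ)^(1/6)`) of the truncation argument in the
characterization lemma for encryption maps. -/
theorem truncation_projection_bound_delta
    {E : Type*} [NormedAddCommGroup E] [InnerProductSpace ℂ E]
    {I : Type*} [Fintype I]
    (γ : I → E) (hγ : Orthonormal ℂ γ)
    (q : I → ℝ) (hq0 : ∀ i, 0 ≤ q i) (hq1 : ∑ i, q i ≤ 1)
    (A : E →L[ℂ] E)
    (δ : ℝ) (hδ : 0 < δ)
    (hA : ∀ i, q i * ‖A (γ i) - γ i‖ ≤ 2 * Real.sqrt δ) :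
    ∀ x : E,
      ‖A (∑ i ∈ Finset.univ.filter (fun i => (4 * δ) ^ ((1 : ℝ) / 6) ≤ q i),
            ⟪γ i, x⟫_ℂ • γ i)
          - ∑ i ∈ Finset.univ.filter (fun i => (4 * δ) ^ ((1 : ℝ) / 6) ≤ q i),
              ⟪γ i, x⟫_ℂ • γ i‖
        ≤ (4 * δ) ^ ((1 : ℝ) / 6) * ‖x‖ := by
  classical
  intro x
  set t : ℝ := (4 * δ) ^ ((1 : ℝ) / 6) with ht_def
  have hu : (0:ℝ) < 4 * δ := by linarith
  have ht : 0 < t := Real.rpow_pos_of_pos hu _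
  set s : Finset I := Finset.univ.filter (fun i => t ≤ q i) with hs_def
  rcases s.eq_empty_or_nonempty with hs | hs
  · rw [hs]
    simp [map_sum]
    positivity
  -- t ≤ 1 and 4δ ≤ 1
  obtain ⟨i₀, hi₀⟩ := hs
  have hti₀ : t ≤ q i₀ := (Finset.mem_filter.mp hi₀).2
  have hq_le : q i₀ ≤ ∑ i, q i := Finset.single_le_sum (fun i _ => hq0 i) (Finset.mem_univ i₀)
  have ht1 : t ≤ 1 := le_trans hti₀ (le_trans hq_le hq1)
  have hu1 : 4 * δ ≤ 1 := by
    by_contra h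
    push_neg at h
    have : (1:ℝ) < t := by
      calc (1:ℝ) = (1:ℝ) ^ ((1:ℝ)/6) := by rw [Real.one_rpow]
        _ < t := Real.rpow_lt_rpow (by norm_num) h (by norm_num)
    linarith
  -- rewrite the difference
  have h1 : A (∑ i ∈ s, ⟪γ i, x⟫_ℂ • γ i) - ∑ i ∈ s, ⟪γ i, x⟫_ℂ • γ i
      = ∑ i ∈ s, ⟪γ i, x⟫_ℂ • (A (γ i) - γ i) := by
    rw [map_sum, ← Finset.sum_sub_distrib]
    congr 1; ext i
    rw [A.map_smul, smul_sub]
  rw [h1]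
  -- pointwise bound
  have h3 : ∀ i ∈ s, ‖A (γ i) - γ i‖ ≤ 2 * Real.sqrt δ / t := by
    intro i hi
    have hti : t ≤ q i := (Finset.mem_filter.mp hi).2
    rw [le_div_iff₀ ht]
    calc ‖A (γ i) - γ i‖ * t ≤ ‖A (γ i) - γ i‖ * q i :=
          mul_le_mul_of_nonneg_left hti (norm_nonneg _)
      _ = q i * ‖A (γ i) - γ i‖ := mul_comm _ _
      _ ≤ 2 * Real.sqrt δ := hA i
  have h2 : ‖∑ i ∈ s, ⟪γ i, x⟫_ℂ • (A (γ i) - γ i)‖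
      ≤ (∑ i ∈ s, ‖⟪γ i, x⟫_ℂ‖) * (2 * Real.sqrt δ / t) := by
    calc ‖∑ i ∈ s, ⟪γ i, x⟫_ℂ • (A (γ i) - γ i)‖
        ≤ ∑ i ∈ s, ‖⟪γ i, x⟫_ℂ • (A (γ i) - γ i)‖ := norm_sum_le _ _
      _ ≤ ∑ i ∈ s, ‖⟪γ i, x⟫_ℂ‖ * (2 * Real.sqrt δ / t) := by
          apply Finset.sum_le_sum
          intro i hi
          rw [norm_smul]
          exact mul_le_mul_of_nonneg_left (h3 i hi) (norm_nonneg _)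
      _ = (∑ i ∈ s, ‖⟪γ i, x⟫_ℂ‖) * (2 * Real.sqrt δ / t) := by
          rw [← Finset.sum_mul]
  -- Cauchy-Schwarz + Bessel
  have hbessel : ∑ i ∈ s, ‖⟪γ i, x⟫_ℂ‖ ^ 2 ≤ ‖x‖ ^ 2 := hγ.sum_inner_products_le x
  have hcs : (∑ i ∈ s, ‖⟪γ i, x⟫_ℂ‖) ^ 2 ≤ (s.card : ℝ) * ‖x‖ ^ 2 := by
    calc (∑ i ∈ s, ‖⟪γ i, x⟫_ℂ‖) ^ 2 ≤ (s.card : ℝ) * ∑ i ∈ s, ‖⟪γ i, x⟫_ℂ‖ ^ 2 :=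
          sq_sum_le_card_mul_sum_sq
      _ ≤ (s.card : ℝ) * ‖x‖ ^ 2 := by
          apply mul_le_mul_of_nonneg_left hbessel (Nat.cast_nonneg _)
  have h4 : ∑ i ∈ s, ‖⟪γ i, x⟫_ℂ‖ ≤ Real.sqrt (s.card) * ‖x‖ := by
    have h0 : 0 ≤ ∑ i ∈ s, ‖⟪γ i, x⟫_ℂ‖ := Finset.sum_nonneg fun i _ => norm_nonneg _
    have := Real.sqrt_le_sqrt hcs
    rwa [Real.sqrt_sq h0, Real.sqrt_mul (Nat.cast_nonneg _), Real.sqrt_sq (norm_nonneg _)] at this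
  -- card bound : card * t ≤ 1
  have hcard : (s.card : ℝ) * t ≤ 1 := by
    calc (s.card : ℝ) * t = ∑ _i ∈ s, t := by rw [Finset.sum_const, nsmul_eq_mul]
      _ ≤ ∑ i ∈ s, q i := Finset.sum_le_sum fun i hi => (Finset.mem_filter.mp hi).2
      _ ≤ ∑ i, q i := Finset.sum_le_sum_of_subset_of_nonneg (Finset.filter_subset _ _)
          (fun i _ _ => hq0 i)
      _ ≤ 1 := hq1
  have hcard' : (s.card : ℝ) ≤ 1 / t := by
    rw [le_div_iff₀ ht]; exact hcard
  have hsqcard : Real.sqrt (s.card) ≤ (4*δ) ^ (-(1:ℝ)/12) := by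
    have h1t : (1:ℝ)/t = (4*δ) ^ (-(1:ℝ)/6) := by
      rw [ht_def, one_div, ← Real.rpow_neg hu.le]
      norm_num
    calc Real.sqrt (s.card) ≤ Real.sqrt (1/t) := Real.sqrt_le_sqrt hcard'
      _ = (4*δ) ^ (-(1:ℝ)/12) := by
          rw [h1t, Real.sqrt_eq_rpow, ← Real.rpow_mul hu.le]
          norm_num
  -- combine
  have hkey : Real.sqrt (s.card) * (2 * Real.sqrt δ / t) ≤ t := by
    have h2s : 2 * Real.sqrt δ = (4*δ) ^ ((1:ℝ)/2) := by
      rw [← Real.sqrt_eq_rpow, show (4:ℝ)*δ = 2^2 * δ by norm_num,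
        Real.sqrt_mul (by positivity), Real.sqrt_sq (by norm_num)]
    have hdiv : 2 * Real.sqrt δ / t = (4*δ) ^ ((1:ℝ)/2 - 1/6) := by
      rw [h2s, ht_def, ← Real.rpow_sub hu]
    calc Real.sqrt (s.card) * (2 * Real.sqrt δ / t)
        ≤ (4*δ) ^ (-(1:ℝ)/12) * (4*δ) ^ ((1:ℝ)/2 - 1/6) := by
          rw [hdiv]
          exact mul_le_mul_of_nonneg_right hsqcard (Real.rpow_nonneg hu.le _)
      _ = (4*δ) ^ ((-(1:ℝ)/12) + ((1:ℝ)/2 - 1/6)) := (Real.rpow_add hu _ _).symm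
      _ = (4*δ) ^ ((1:ℝ)/4) := by norm_num
      _ ≤ (4*δ) ^ ((1:ℝ)/6) :=
          Real.rpow_le_rpow_of_exponent_ge hu hu1 (by norm_num)
  calc ‖∑ i ∈ s, ⟪γ i, x⟫_ℂ • (A (γ i) - γ i)‖
      ≤ (∑ i ∈ s, ‖⟪γ i, x⟫_ℂ‖) * (2 * Real.sqrt δ / t) := h2
    _ ≤ (Real.sqrt (s.card) * ‖x‖) * (2 * Real.sqrt δ / t) := by
        apply mul_le_mul_of_nonneg_right h4; positivity
    _ = (Real.sqrt (s.card) * (2 * Real.sqrt δ / t)) * ‖x‖ := by ring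
    _ ≤ t * ‖x‖ := mul_le_mul_of_nonneg_right hkey (norm_nonneg _)
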